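/- If γ₁, γ₂ : [0,1] → Sp(2n) are both positive paths, then their pointwise product t ↦ γ₁(t)·γ₂(t) is also a positive path. Specifically, if γ₁'(t) = J P₁(t) γ₁(t) and γ₂'(t) = J P₂(t) γ₂(t) with P₁(t), P₂(t) symmetric positive definite, then (γ₁γ₂)'(t) = J [P₁(t) + γ₁(t)⁻ᵀ P₂(t) γ₁(t)⁻¹] γ₁(t)γ₂(t), and P₁(t) + γ₁(t)⁻ᵀ P₂(t) γ₁(t)⁻¹ is symmetric positive definite. -/

import Mathlib

open Matrix Set

noncomputable section

def J2 : Matrix (Fin 2) (Fin 2) ℝ := !![0, -1; 1, 0]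

/-- The standard symplectic matrix `J = diag(J₂, …, J₂)`. -/
def Jn (n : ℕ) : Matrix (Fin 2 × Fin n) (Fin 2 × Fin n) ℝ :=
  Matrix.blockDiagonal fun _ => J2

lemma J2_mul_J2 : J2 * J2 = -1 := by
  ext i j
  fin_cases i <;> fin_cases j <;> simp [J2, Matrix.mul_apply, Fin.sum_univ_two, Matrix.one_apply]

lemma Jn_mul_Jn (n : ℕ) : Jn n * Jn n = -1 := by
  rw [Jn, ← Matrix.blockDiagonal_mul]
  simp only [J2_mul_J2]
  rw [show (fun _ : Fin n => (-1 : Matrix (Fin 2) (Fin 2) ℝ))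
      = -(fun _ => (1 : Matrix (Fin 2) (Fin 2) ℝ)) from rfl,
    Matrix.blockDiagonal_neg]
  rw [show (fun _ : Fin n => (1 : Matrix (Fin 2) (Fin 2) ℝ)) = (1 : Fin n → Matrix (Fin 2) (Fin 2) ℝ) from rfl,
    Matrix.blockDiagonal_one]

lemma Jn_mul_neg_Jn (n : ℕ) : Jn n * (-(Jn n)) = 1 := by
  rw [Matrix.mul_neg, Jn_mul_Jn]; simp

lemma isUnit_Jn (n : ℕ) : IsUnit (Jn n) :=
  @isUnit_of_invertible _ _ _ (invertibleOfRightInverse _ _ (Jn_mul_neg_Jn n))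

lemma isUnit_det_Jn (n : ℕ) : IsUnit (Jn n).det :=
  (Matrix.isUnit_iff_isUnit_det _).mp (isUnit_Jn n)

/-- symplectic ⇒ invertible -/
lemma isUnit_det_of_symp {n : ℕ} {M : Matrix (Fin 2 × Fin n) (Fin 2 × Fin n) ℝ}
    (h : Mᵀ * Jn n * M = Jn n) : IsUnit M.det := by
  have hd : M.det * ((Jn n).det * M.det) = (Jn n).det := by
    have := congrArg Matrix.det h
    simpa [Matrix.det_mul, Matrix.det_transpose, mul_comm, mul_left_comm, mul_assoc] using this
  have h0 : (Jn n).det ≠ 0 := (isUnit_det_Jn n).ne_zero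
  have : M.det ≠ 0 := by
    intro h'
    rw [h', zero_mul] at hd
    exact h0 hd.symm
  exact isUnit_iff_ne_zero.mpr this

/-- symplectic ⇒ M J = J M⁻ᵀ -/
lemma mul_Jn_eq {n : ℕ} {M : Matrix (Fin 2 × Fin n) (Fin 2 × Fin n) ℝ}
    (h : Mᵀ * Jn n * M = Jn n) : M * Jn n = Jn n * (M⁻¹)ᵀ := by
  have hu : IsUnit M.det := isUnit_det_of_symp h
  have h1 : Mᵀ * Jn n = Jn n * M⁻¹ := by
    calc Mᵀ * Jn n = (Mᵀ * Jn n * M) * M⁻¹ := by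
          rw [Matrix.mul_assoc, Matrix.mul_nonsing_inv _ hu, Matrix.mul_one]
      _ = Jn n * M⁻¹ := by rw [h]
  have h2 : Mᵀ = Jn n * M⁻¹ * (-(Jn n)) := by
    calc Mᵀ = Mᵀ * (Jn n * (-(Jn n))) := by rw [Jn_mul_neg_Jn, Matrix.mul_one]
      _ = (Mᵀ * Jn n) * (-(Jn n)) := by rw [Matrix.mul_assoc]
      _ = Jn n * M⁻¹ * (-(Jn n)) := by rw [h1]
  have h3 : M * Jn n * Mᵀ = Jn n := by
    rw [h2]
    calc M * Jn n * (Jn n * M⁻¹ * (-(Jn n)))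
        = M * (Jn n * Jn n) * M⁻¹ * (-(Jn n)) := by
          simp only [Matrix.mul_assoc]
      _ = M * (-1) * M⁻¹ * (-(Jn n)) := by rw [Jn_mul_Jn]
      _ = -(M * M⁻¹) * (-(Jn n)) := by
          simp [Matrix.mul_neg, Matrix.neg_mul]
      _ = Jn n := by rw [Matrix.mul_nonsing_inv _ hu]; simp
  have hut : IsUnit (Mᵀ).det := by rwa [Matrix.det_transpose]
  calc M * Jn n = (M * Jn n * Mᵀ) * (Mᵀ)⁻¹ := by
        rw [Matrix.mul_assoc, Matrix.mul_nonsing_inv _ hut, Matrix.mul_one]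
    _ = Jn n * (M⁻¹)ᵀ := by rw [h3, Matrix.transpose_nonsing_inv]

/-- PosDef congruence over ℝ -/
lemma posdef_conj {m : Type*} [Fintype m] [DecidableEq m]
    {A B : Matrix m m ℝ} (hA : A.PosDef) (hB : IsUnit B) : (Bᵀ * A * B).PosDef := by
  have hBt : Bᵀ = Bᴴ := (Matrix.conjTranspose_eq_transpose_of_trivial B).symm
  rw [hBt]
  exact hA.conjTranspose_mul_mul_same (Matrix.mulVec_injective_of_isUnit hB)

/-- The pointwise product of two positive paths in `Sp(2n)` is a positive path, with
the explicit formula `(γ₁γ₂)' = J [P₁ + γ₁⁻ᵀ P₂ γ₁⁻¹] γ₁γ₂`, where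
`P₁ + γ₁⁻ᵀ P₂ γ₁⁻¹` is symmetric positive definite. -/
theorem product_of_positive_paths {n : ℕ}
    (γ₁ γ₂ P₁ P₂ : ℝ → Matrix (Fin 2 × Fin n) (Fin 2 × Fin n) ℝ)
    (hsp₁ : ∀ t ∈ Icc (0:ℝ) 1, (γ₁ t)ᵀ * Jn n * γ₁ t = Jn n)
    (hsp₂ : ∀ t ∈ Icc (0:ℝ) 1, (γ₂ t)ᵀ * Jn n * γ₂ t = Jn n)
    (hP₁ : ∀ t ∈ Icc (0:ℝ) 1, (P₁ t)ᵀ = P₁ t ∧ (P₁ t).PosDef)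
    (hP₂ : ∀ t ∈ Icc (0:ℝ) 1, (P₂ t)ᵀ = P₂ t ∧ (P₂ t).PosDef)
    (hd₁ : ∀ t ∈ Icc (0:ℝ) 1, ∀ i j,
      HasDerivAt (fun s => γ₁ s i j) ((Jn n * P₁ t * γ₁ t) i j) t)
    (hd₂ : ∀ t ∈ Icc (0:ℝ) 1, ∀ i j,
      HasDerivAt (fun s => γ₂ s i j) ((Jn n * P₂ t * γ₂ t) i j) t) :
    ∀ t ∈ Icc (0:ℝ) 1,
      (P₁ t + ((γ₁ t)⁻¹)ᵀ * P₂ t * (γ₁ t)⁻¹)ᵀ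
          = P₁ t + ((γ₁ t)⁻¹)ᵀ * P₂ t * (γ₁ t)⁻¹ ∧
      (P₁ t + ((γ₁ t)⁻¹)ᵀ * P₂ t * (γ₁ t)⁻¹).PosDef ∧
      ∀ i j, HasDerivAt (fun s => (γ₁ s * γ₂ s) i j)
        ((Jn n * (P₁ t + ((γ₁ t)⁻¹)ᵀ * P₂ t * (γ₁ t)⁻¹) * (γ₁ t * γ₂ t)) i j) t := by
  intro t ht
  have hu : IsUnit (γ₁ t).det := isUnit_det_of_symp (hsp₁ t ht)
  have huM : IsUnit (γ₁ t) := (Matrix.isUnit_iff_isUnit_det _).mpr hu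
  have huI : IsUnit ((γ₁ t)⁻¹) := Matrix.isUnit_nonsing_inv_iff.mpr huM
  have hsym : (P₁ t + ((γ₁ t)⁻¹)ᵀ * P₂ t * (γ₁ t)⁻¹)ᵀ
      = P₁ t + ((γ₁ t)⁻¹)ᵀ * P₂ t * (γ₁ t)⁻¹ := by
    rw [Matrix.transpose_add, Matrix.transpose_mul, Matrix.transpose_mul,
      Matrix.transpose_transpose, (hP₁ t ht).1, (hP₂ t ht).1, Matrix.mul_assoc]
  refine ⟨hsym, ?_, ?_⟩
  · exact (hP₁ t ht).2.add (posdef_conj (hP₂ t ht).2 huI)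
  · intro i j
    have key : Jn n * P₁ t * γ₁ t * γ₂ t + γ₁ t * (Jn n * P₂ t * γ₂ t)
        = Jn n * (P₁ t + ((γ₁ t)⁻¹)ᵀ * P₂ t * (γ₁ t)⁻¹) * (γ₁ t * γ₂ t) := by
      have hJ : γ₁ t * Jn n = Jn n * ((γ₁ t)⁻¹)ᵀ := mul_Jn_eq (hsp₁ t ht)
      have h2 : γ₁ t * (Jn n * P₂ t * γ₂ t)
          = Jn n * (((γ₁ t)⁻¹)ᵀ * P₂ t * (γ₁ t)⁻¹) * (γ₁ t * γ₂ t) := by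
        calc γ₁ t * (Jn n * P₂ t * γ₂ t) = (γ₁ t * Jn n) * P₂ t * γ₂ t := by
              simp only [Matrix.mul_assoc]
          _ = Jn n * ((γ₁ t)⁻¹)ᵀ * P₂ t * γ₂ t := by rw [hJ]
          _ = Jn n * (((γ₁ t)⁻¹)ᵀ * P₂ t * (γ₁ t)⁻¹) * (γ₁ t * γ₂ t) := by
              simp only [Matrix.mul_assoc]
              rw [← Matrix.mul_assoc ((γ₁ t)⁻¹) (γ₁ t) (γ₂ t),
                Matrix.nonsing_inv_mul _ hu, Matrix.one_mul]
      rw [Matrix.mul_add, Matrix.add_mul, h2]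
      simp only [Matrix.mul_assoc]
    have hsum : HasDerivAt (fun s => ∑ k, γ₁ s i k * γ₂ s k j)
        ((Jn n * P₁ t * γ₁ t * γ₂ t + γ₁ t * (Jn n * P₂ t * γ₂ t)) i j) t := by
      have : (Jn n * P₁ t * γ₁ t * γ₂ t + γ₁ t * (Jn n * P₂ t * γ₂ t)) i j
          = ∑ k, ((Jn n * P₁ t * γ₁ t) i k * γ₂ t k j
              + γ₁ t i k * (Jn n * P₂ t * γ₂ t) k j) := by
        simp [Matrix.add_apply, Matrix.mul_apply, Finset.sum_add_distrib]
      rw [this]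
      exact HasDerivAt.fun_sum fun k _ =>
        ((hd₁ t ht i k).mul (hd₂ t ht k j))
    have heq : (fun s => (γ₁ s * γ₂ s) i j) = fun s => ∑ k, γ₁ s i k * γ₂ s k j := by
      funext s; exact Matrix.mul_apply
    rw [heq, ← key]
    exact hsum
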